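/- Every simple MV-algebra embeds into the standard MV-algebra [0,1]_MV; that is, [0,1]_MV is the maximum simple MV-algebra. -/

import Mathlib

/-- The operations of an MV-algebra ⟨A, ∧, ∨, ⊙, →, 0, 1⟩. -/
structure MVOps (α : Type*) where
  meet : α → α → α
  join : α → α → α
  odot : α → α → α
  impl : α → α → α
  zero : α
  one : α

namespace MVOps
variable {α : Type*}
/-- Negation ¬x = x → 0. -/
def neg (M : MVOps α) (x : α) : α := M.impl x M.zero
/-- x ⊕ y = ¬(¬x ⊙ ¬y). -/
def oplus (M : MVOps α) (x y : α) : α := M.neg (M.odot (M.neg x) (M.neg y))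
/-- n-fold ⊕-sum: 0·x = 0, (n+1)·x = n·x ⊕ x. -/
def nsum (M : MVOps α) : ℕ → α → α
  | 0, _ => M.zero
  | n + 1, x => M.oplus (M.nsum n x) x
end MVOps

/-- The MV-algebra axioms. -/
structure IsMVAlgebra {α : Type*} (M : MVOps α) : Prop where
  odot_comm : ∀ x y, M.odot x y = M.odot y x
  odot_assoc : ∀ x y z, M.odot (M.odot x y) z = M.odot x (M.odot y z)
  odot_one : ∀ x, M.odot x M.one = x
  meet_comm : ∀ x y, M.meet x y = M.meet y x
  meet_assoc : ∀ x y z, M.meet (M.meet x y) z = M.meet x (M.meet y z)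
  join_comm : ∀ x y, M.join x y = M.join y x
  join_assoc : ∀ x y z, M.join (M.join x y) z = M.join x (M.join y z)
  absorb_join_meet : ∀ x y, M.join x (M.meet x y) = x
  absorb_meet_join : ∀ x y, M.meet x (M.join x y) = x
  meet_one : ∀ x, M.meet x M.one = x
  join_zero : ∀ x, M.join x M.zero = x
  impl_odot : ∀ x y z, M.impl (M.odot x y) z = M.impl x (M.impl y z)
  ax4 : ∀ x y, M.meet (M.odot (M.impl x y) x) y = M.odot (M.impl x y) x
  ax5 : ∀ x y, M.impl (M.meet x y) y = M.one
  ax6 : ∀ x y, M.odot x (M.impl x y) = M.meet x y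
  ax7 : ∀ x y, M.join (M.impl x y) (M.impl y x) = M.one
  ax8 : ∀ x, M.impl (M.impl x M.zero) M.zero = x

/-- An MV-congruence: an equivalence relation compatible with all MV-operations. -/
def IsMVCong {α : Type*} (M : MVOps α) (r : α → α → Prop) : Prop :=
  Equivalence r ∧
  (∀ a b c d, r a b → r c d → r (M.meet a c) (M.meet b d)) ∧
  (∀ a b c d, r a b → r c d → r (M.join a c) (M.join b d)) ∧
  (∀ a b c d, r a b → r c d → r (M.odot a c) (M.odot b d)) ∧
  (∀ a b c d, r a b → r c d → r (M.impl a c) (M.impl b d))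

/-- Simplicity: nontrivial and the only congruences are the identity and the full one. -/
def IsSimpleMV {α : Type*} (M : MVOps α) : Prop :=
  Nontrivial α ∧ ∀ r : α → α → Prop, IsMVCong M r →
    (∀ x y, r x y ↔ x = y) ∨ (∀ x y, r x y)

/-- An MV-homomorphism. -/
structure IsMVHom {α : Type*} {β : Type*} (M : MVOps α) (N : MVOps β) (f : α → β) : Prop where
  map_zero : f M.zero = N.zero
  map_one : f M.one = N.one
  map_meet : ∀ x y, f (M.meet x y) = N.meet (f x) (f y)
  map_join : ∀ x y, f (M.join x y) = N.join (f x) (f y)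
  map_odot : ∀ x y, f (M.odot x y) = N.odot (f x) (f y)
  map_impl : ∀ x y, f (M.impl x y) = N.impl (f x) (f y)

/-- The standard MV-algebra on [0,1]: x⊙y = max(0, x+y−1), x→y = min(1, 1−x+y). -/
noncomputable def stdMV : MVOps unitInterval where
  meet x y := min x y
  join x y := max x y
  odot x y := ⟨max 0 (x.1 + y.1 - 1),
    le_max_left _ _, max_le zero_le_one (by linarith [x.2.2, y.2.2])⟩
  impl x y := ⟨min 1 (1 - x.1 + y.1),
    le_min zero_le_one (by linarith [x.2.2, y.2.1]), min_le_left _ _⟩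
  zero := 0
  one := 1

/-- A subset of an MV-algebra closed under all MV-operations. -/
structure IsMVSubalg {α : Type*} (M : MVOps α) (S : Set α) : Prop where
  zero_mem : M.zero ∈ S
  one_mem : M.one ∈ S
  meet_mem : ∀ x ∈ S, ∀ y ∈ S, M.meet x y ∈ S
  join_mem : ∀ x ∈ S, ∀ y ∈ S, M.join x y ∈ S
  odot_mem : ∀ x ∈ S, ∀ y ∈ S, M.odot x y ∈ S
  impl_mem : ∀ x ∈ S, ∀ y ∈ S, M.impl x y ∈ S

/-- The MV-operations restricted to a subalgebra. -/
def MVOps.restrict {α : Type*} (M : MVOps α) (S : Set α) (h : IsMVSubalg M S) : MVOps S where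
  meet x y := ⟨M.meet x y, h.meet_mem _ x.2 _ y.2⟩
  join x y := ⟨M.join x y, h.join_mem _ x.2 _ y.2⟩
  odot x y := ⟨M.odot x y, h.odot_mem _ x.2 _ y.2⟩
  impl x y := ⟨M.impl x y, h.impl_mem _ x.2 _ y.2⟩
  zero := ⟨M.zero, h.zero_mem⟩
  one := ⟨M.one, h.one_mem⟩

namespace MVAux

variable {α : Type*} {M : MVOps α}

/-- The lattice order. -/
def mle (M : MVOps α) (x y : α) : Prop := M.meet x y = x

section Basic
variable (hM : IsMVAlgebra M)
include hM

lemma meet_idem (x : α) : M.meet x x = x := by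
  have h := hM.absorb_meet_join x (M.meet x x)
  rwa [hM.absorb_join_meet] at h

lemma join_idem (x : α) : M.join x x = x := by
  have h := hM.absorb_join_meet x (M.join x x)
  rwa [hM.absorb_meet_join] at h

lemma mle_refl (x : α) : mle M x x := meet_idem hM x

lemma mle_antisymm {x y : α} (h1 : mle M x y) (h2 : mle M y x) : x = y := by
  unfold mle at h1 h2; rw [← h1, hM.meet_comm, h2]

lemma mle_trans {x y z : α} (h1 : mle M x y) (h2 : mle M y z) : mle M x z := by
  unfold mle at *; rw [← h1, hM.meet_assoc, h2]

lemma meet_mle_left (x y : α) : mle M (M.meet x y) x := by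
  unfold mle
  rw [hM.meet_comm, ← hM.meet_assoc, meet_idem hM]

lemma meet_mle_right (x y : α) : mle M (M.meet x y) y := by
  rw [hM.meet_comm]; exact meet_mle_left hM y x

lemma mle_meet {x y z : α} (h1 : mle M z x) (h2 : mle M z y) : mle M z (M.meet x y) := by
  unfold mle at *; rw [← hM.meet_assoc, h1, h2]

lemma join_eq_iff_mle {x y : α} : mle M x y ↔ M.join x y = y := by
  constructor
  · intro h1
    have := hM.absorb_join_meet y x
    rw [hM.meet_comm, h1] at this
    rw [hM.join_comm]; exact this
  · intro h1
    have := hM.absorb_meet_join x y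
    rw [h1] at this; exact this

lemma mle_join_left (x y : α) : mle M x (M.join x y) := hM.absorb_meet_join x y

lemma mle_join_right (x y : α) : mle M y (M.join x y) := by
  rw [hM.join_comm]; exact mle_join_left hM y x

lemma join_mle {x y z : α} (h1 : mle M x z) (h2 : mle M y z) : mle M (M.join x y) z := by
  rw [join_eq_iff_mle hM] at h1 h2 ⊢
  rw [hM.join_assoc, h2, h1]

lemma mle_one (x : α) : mle M x M.one := hM.meet_one x

lemma zero_mle (x : α) : mle M M.zero x := by
  unfold mle
  have h1 : M.join M.zero x = x := by rw [hM.join_comm]; exact hM.join_zero x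
  have := hM.absorb_meet_join M.zero x
  rwa [h1] at this

lemma mle_one_iff {x : α} : mle M M.one x ↔ x = M.one :=
  ⟨fun h => mle_antisymm hM (mle_one hM x) h, fun h => h ▸ mle_refl hM x⟩

lemma mle_zero_iff {x : α} : mle M x M.zero ↔ x = M.zero :=
  ⟨fun h => mle_antisymm hM h (zero_mle hM x), fun h => h ▸ mle_refl hM x⟩

lemma one_odot (x : α) : M.odot M.one x = x := by rw [hM.odot_comm]; exact hM.odot_one x

lemma mle_of_impl_eq_one {x y : α} (h : M.impl x y = M.one) : mle M x y := by
  have := hM.ax6 x y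
  rw [h, hM.odot_one] at this
  exact this.symm

lemma impl_eq_one_of_mle {x y : α} (h : mle M x y) : M.impl x y = M.one := by
  have := hM.ax5 x y
  unfold mle at h; rwa [h] at this

lemma impl_eq_one_iff {x y : α} : M.impl x y = M.one ↔ mle M x y :=
  ⟨mle_of_impl_eq_one hM, impl_eq_one_of_mle hM⟩

lemma impl_self (x : α) : M.impl x x = M.one := impl_eq_one_of_mle hM (mle_refl hM x)

/-- Residuation. -/
lemma resid {x y z : α} : mle M (M.odot x y) z ↔ mle M x (M.impl y z) := by
  rw [← impl_eq_one_iff hM, ← impl_eq_one_iff hM, hM.impl_odot]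

lemma one_impl (x : α) : M.impl M.one x = x := by
  have h1 := hM.ax6 M.one x
  rw [one_odot hM, hM.meet_comm, hM.meet_one] at h1
  exact h1

lemma impl_one (x : α) : M.impl x M.one = M.one := impl_eq_one_of_mle hM (mle_one hM x)

lemma odot_mle_left (x y : α) : mle M (M.odot x y) x := by
  rw [hM.odot_comm, resid hM]
  have : M.impl x x = M.one := impl_self hM x
  rw [this]; exact mle_one hM y

lemma odot_mle_right (x y : α) : mle M (M.odot x y) y := by
  rw [hM.odot_comm]; exact odot_mle_left hM y x

lemma odot_mono_right {y z : α} (x : α) (h : mle M y z) : mle M (M.odot x y) (M.odot x z) := by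
  rw [hM.odot_comm x y, resid hM]
  have h2 : mle M z (M.impl x (M.odot x z)) := by
    rw [← resid hM, hM.odot_comm]; exact mle_refl hM _
  exact mle_trans hM h h2

lemma odot_mono {a b c d : α} (h1 : mle M a b) (h2 : mle M c d) :
    mle M (M.odot a c) (M.odot b d) := by
  have s1 : mle M (M.odot a c) (M.odot a d) := odot_mono_right hM a h2
  have s2 : mle M (M.odot a d) (M.odot b d) := by
    rw [hM.odot_comm a d, hM.odot_comm b d]; exact odot_mono_right hM d h1
  exact mle_trans hM s1 s2

lemma impl_mono_right {y z : α} (x : α) (h : mle M y z) :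
    mle M (M.impl x y) (M.impl x z) := by
  rw [← resid hM]
  have h1 : mle M (M.odot (M.impl x y) x) y := by
    have := hM.ax4 x y; exact this
  exact mle_trans hM h1 h

lemma impl_anti_left {x y : α} (z : α) (h : mle M x y) :
    mle M (M.impl y z) (M.impl x z) := by
  rw [← resid hM]
  have h1 : mle M (M.odot (M.impl y z) x) (M.odot (M.impl y z) y) := odot_mono_right hM _ h
  exact mle_trans hM h1 (hM.ax4 y z)

lemma mp (x y : α) : mle M (M.odot (M.impl x y) x) y := hM.ax4 x y

lemma odot_zero (x : α) : M.odot x M.zero = M.zero := by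
  apply mle_antisymm hM (odot_mle_right hM x M.zero) (zero_mle hM _)

lemma zero_odot (x : α) : M.odot M.zero x = M.zero := by rw [hM.odot_comm]; exact odot_zero hM x

lemma neg_neg (x : α) : M.neg (M.neg x) = x := hM.ax8 x

lemma neg_one : M.neg M.one = M.zero := by
  unfold MVOps.neg; rw [one_impl hM]

lemma neg_zero : M.neg M.zero = M.one := impl_self hM M.zero

lemma odot_neg_self (x : α) : M.odot x (M.neg x) = M.zero := by
  unfold MVOps.neg
  rw [hM.ax6]
  exact mle_antisymm hM (meet_mle_right hM x M.zero) (zero_mle hM _)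

lemma neg_anti {x y : α} (h : mle M x y) : mle M (M.neg y) (M.neg x) :=
  impl_anti_left hM M.zero h

lemma neg_inj {x y : α} (h : M.neg x = M.neg y) : x = y := by
  rw [← neg_neg hM x, h, neg_neg hM]

lemma mle_neg_iff {x y : α} : mle M x (M.neg y) ↔ mle M y (M.neg x) := by
  constructor
  · intro h
    have := neg_anti hM h
    rw [neg_neg hM] at this
    exact this
  · intro h
    have := neg_anti hM h
    rw [neg_neg hM] at this
    exact this

lemma contrapose (x y : α) : M.impl (M.neg y) (M.neg x) = M.impl x y := by
  show M.impl (M.impl y M.zero) (M.impl x M.zero) = _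
  rw [← hM.impl_odot, hM.odot_comm, hM.impl_odot,
    show M.impl (M.impl y M.zero) M.zero = y from hM.ax8 y]

lemma oplus_eq_impl (x y : α) : M.oplus x y = M.impl (M.neg x) y := by
  show M.neg (M.odot (M.neg x) (M.neg y)) = _
  show M.impl (M.odot (M.neg x) (M.neg y)) M.zero = _
  rw [hM.impl_odot]
  show M.impl (M.neg x) (M.neg (M.neg y)) = _
  rw [neg_neg hM]

lemma impl_eq_oplus (x y : α) : M.impl x y = M.oplus (M.neg x) y := by
  rw [oplus_eq_impl hM, neg_neg hM]

lemma oplus_comm (x y : α) : M.oplus x y = M.oplus y x := by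
  unfold MVOps.oplus; rw [hM.odot_comm]

lemma neg_oplus (x y : α) : M.neg (M.oplus x y) = M.odot (M.neg x) (M.neg y) := by
  unfold MVOps.oplus; rw [neg_neg hM]

lemma neg_odot (x y : α) : M.neg (M.odot x y) = M.oplus (M.neg x) (M.neg y) := by
  unfold MVOps.oplus; rw [neg_neg hM, neg_neg hM]

lemma oplus_assoc (x y z : α) :
    M.oplus (M.oplus x y) z = M.oplus x (M.oplus y z) := by
  unfold MVOps.oplus
  rw [neg_neg hM, neg_neg hM, hM.odot_assoc]

lemma oplus_zero (x : α) : M.oplus x M.zero = x := by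
  unfold MVOps.oplus
  rw [neg_zero hM, hM.odot_one, neg_neg hM]

lemma zero_oplus (x : α) : M.oplus M.zero x = x := by rw [oplus_comm hM, oplus_zero hM]

lemma oplus_one (x : α) : M.oplus x M.one = M.one := by
  unfold MVOps.oplus
  rw [neg_one hM, odot_zero hM, neg_zero hM]

lemma one_oplus (x : α) : M.oplus M.one x = M.one := by rw [oplus_comm hM, oplus_one hM]

lemma oplus_mono {a b c d : α} (h1 : mle M a b) (h2 : mle M c d) :
    mle M (M.oplus a c) (M.oplus b d) := by
  unfold MVOps.oplus
  exact neg_anti hM (odot_mono hM (neg_anti hM h1) (neg_anti hM h2))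

lemma mle_oplus_left (x y : α) : mle M x (M.oplus x y) := by
  have := oplus_mono hM (mle_refl hM x) (zero_mle hM y)
  rwa [oplus_zero hM] at this

lemma mle_oplus_right (x y : α) : mle M y (M.oplus x y) := by
  rw [oplus_comm hM]; exact mle_oplus_left hM y x

lemma oplus_neg_self (x : α) : M.oplus x (M.neg x) = M.one := by
  rw [oplus_eq_impl hM]; exact impl_self hM (M.neg x)

lemma odot_eq_zero_iff {x y : α} : M.odot x y = M.zero ↔ mle M x (M.neg y) := by
  rw [← mle_zero_iff hM, resid hM]; rfl

lemma oplus_eq_one_iff {x y : α} : M.oplus x y = M.one ↔ mle M (M.neg x) y := by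
  rw [oplus_eq_impl hM, impl_eq_one_iff hM]

/-- (x⊕y)⊙¬y = x when x ≤ ¬y. -/
lemma sub_add_cancel {x y : α} (h : mle M x (M.neg y)) :
    M.odot (M.oplus x y) (M.neg y) = x := by
  rw [oplus_comm hM, oplus_eq_impl hM, hM.odot_comm, hM.ax6, hM.meet_comm]
  exact h

/-- (x⊙¬y)⊕y = x when y ≤ x. -/
lemma add_sub_cancel {x y : α} (h : mle M y x) :
    M.oplus (M.odot x (M.neg y)) y = x := by
  have hx : M.odot x (M.neg y) = M.neg (M.oplus (M.neg x) y) := by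
    rw [neg_oplus hM, neg_neg hM]
  rw [hx]
  have : M.oplus (M.neg (M.oplus (M.neg x) y)) y
      = M.neg (M.odot (M.oplus (M.neg x) y) (M.neg y)) := by
    unfold MVOps.oplus
    rw [neg_neg hM]
  rw [this, sub_add_cancel hM (by rw [mle_neg_iff hM, neg_neg hM]; exact h), neg_neg hM]

/-- x ⊕ (y⊙¬x) = x ∨ y. -/
lemma oplus_sub_eq_join (x y : α) : M.oplus x (M.odot y (M.neg x)) = M.join x y := by
  have h1 : M.neg (M.oplus x (M.odot y (M.neg x)))
      = M.odot (M.neg x) (M.impl (M.neg x) (M.neg y)) := by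
    rw [neg_oplus hM]
    congr 1
    show M.impl (M.odot y (M.neg x)) M.zero = _
    rw [hM.impl_odot]
    show M.impl y (M.neg (M.neg x)) = _
    rw [neg_neg hM, contrapose hM]
  have h2 : M.neg (M.oplus x (M.odot y (M.neg x))) = M.meet (M.neg x) (M.neg y) := by
    rw [h1, hM.ax6]
  have h3 : M.meet (M.neg x) (M.neg y) = M.neg (M.join x y) := by
    apply mle_antisymm hM
    · rw [mle_neg_iff hM]
      apply join_mle hM
      · exact (mle_neg_iff hM).mpr (meet_mle_left hM _ _)
      · exact (mle_neg_iff hM).mpr (meet_mle_right hM _ _)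
    · apply mle_meet hM
      · exact neg_anti hM (mle_join_left hM x y)
      · exact neg_anti hM (mle_join_right hM x y)
  have := congrArg M.neg h2
  rwa [neg_neg hM, h3, neg_neg hM] at this

/-- Cancellation: u⊕w = v⊕w, u,v ≤ ¬w ⇒ u = v. -/
lemma oplus_cancel {u v w : α} (h : M.oplus u w = M.oplus v w)
    (hu : mle M u (M.neg w)) (hv : mle M v (M.neg w)) : u = v := by
  have := sub_add_cancel hM hu
  rw [h, sub_add_cancel hM hv] at this
  exact this.symm

end Basic

section Basic
variable (hM : IsMVAlgebra M)
include hM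

lemma odot4_swap (p q r s : α) :
    M.odot (M.odot p q) (M.odot r s) = M.odot (M.odot p r) (M.odot q s) := by
  rw [hM.odot_assoc, hM.odot_assoc]
  congr 1
  rw [← hM.odot_assoc, ← hM.odot_assoc, hM.odot_comm q r]

lemma odot_join_distrib (t x u : α) :
    M.odot t (M.join x u) = M.join (M.odot t x) (M.odot t u) := by
  apply mle_antisymm hM
  · rw [hM.odot_comm, resid hM]
    apply join_mle hM
    · rw [← resid hM, hM.odot_comm]
      exact mle_join_left hM _ _
    · rw [← resid hM, hM.odot_comm]
      exact mle_join_right hM _ _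
  · apply join_mle hM
    · exact odot_mono_right hM t (mle_join_left hM x u)
    · exact odot_mono_right hM t (mle_join_right hM x u)

lemma impl_trans_odot (x y z : α) :
    mle M (M.odot (M.impl x y) (M.impl y z)) (M.impl x z) := by
  rw [← resid hM]
  have e1 : M.odot (M.odot (M.impl x y) (M.impl y z)) x
      = M.odot (M.impl y z) (M.odot (M.impl x y) x) := by
    rw [hM.odot_comm (M.impl x y) (M.impl y z), hM.odot_assoc]
  rw [e1]
  exact mle_trans hM (odot_mono_right hM _ (hM.ax4 x y)) (hM.ax4 y z)

lemma odot_rot (p q r s : α) :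
    M.odot (M.odot (M.odot p q) r) s = M.odot q (M.odot r (M.odot p s)) := by
  rw [hM.odot_assoc (M.odot p q) r s, hM.odot_comm p q, hM.odot_assoc q p (M.odot r s),
    ← hM.odot_assoc p r s, hM.odot_comm p r, hM.odot_assoc r p s]

lemma imp_impl (a b c d : α) :
    mle M (M.odot (M.impl b a) (M.impl c d)) (M.impl (M.impl a c) (M.impl b d)) := by
  rw [← resid hM, ← resid hM]
  rw [odot_rot hM]
  have s1 : mle M (M.odot (M.impl a c) (M.odot (M.impl b a) b)) c :=
    mle_trans hM (odot_mono_right hM _ (hM.ax4 b a)) (hM.ax4 a c)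
  exact mle_trans hM (odot_mono_right hM _ s1) (hM.ax4 c d)

lemma imp_meet (x y u v : α) :
    mle M (M.odot (M.impl x y) (M.impl u v)) (M.impl (M.meet x u) (M.meet y v)) := by
  rw [← resid hM]
  apply mle_meet hM
  · exact mle_trans hM (odot_mono hM (odot_mle_left hM _ _) (meet_mle_left hM x u)) (hM.ax4 x y)
  · exact mle_trans hM (odot_mono hM (odot_mle_right hM _ _) (meet_mle_right hM x u)) (hM.ax4 u v)

lemma imp_join (x y u v : α) :
    mle M (M.odot (M.impl x y) (M.impl u v)) (M.impl (M.join x u) (M.join y v)) := by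
  rw [← resid hM, odot_join_distrib hM]
  apply join_mle hM
  · exact mle_trans hM (mle_trans hM (odot_mono hM (odot_mle_left hM _ _) (mle_refl hM x))
      (hM.ax4 x y)) (mle_join_left hM y v)
  · exact mle_trans hM (mle_trans hM (odot_mono hM (odot_mle_right hM _ _) (mle_refl hM u))
      (hM.ax4 u v)) (mle_join_right hM y v)

lemma imp_odot2 (x y u v : α) :
    mle M (M.odot (M.impl x y) (M.impl u v)) (M.impl (M.odot x u) (M.odot y v)) := by
  rw [← resid hM, odot4_swap hM]
  exact odot_mono hM (hM.ax4 x y) (hM.ax4 u v)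

/-- ⊙-powers. -/
def mpow (M : MVOps α) (a : α) : ℕ → α
  | 0 => M.one
  | n + 1 => M.odot (mpow M a n) a

lemma mpow_add (a : α) (m n : ℕ) :
    mpow M a (m + n) = M.odot (mpow M a m) (mpow M a n) := by
  induction n with
  | zero => simp [mpow, hM.odot_one]
  | succ n ih =>
    show mpow M a (m + n + 1) = _
    show M.odot (mpow M a (m + n)) a = _
    rw [ih, hM.odot_assoc]
    rfl

lemma mpow_one_eq (a : α) : mpow M a 1 = a := by
  show M.odot M.one a = a
  exact one_odot hM a

lemma mpow_succ_mle (a : α) (n : ℕ) : mle M (mpow M a (n + 1)) a :=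
  odot_mle_right hM _ _

/-- distance-style conjunction -/
def dd (M : MVOps α) (x y : α) : α := M.odot (M.impl x y) (M.impl y x)

lemma dd_one_right (x : α) : dd M x M.one = x := by
  unfold dd
  rw [impl_one hM, one_impl hM, one_odot hM]

lemma zero_ne_one (hS : IsSimpleMV M) : M.zero ≠ M.one := by
  intro h
  obtain ⟨x, y, hxy⟩ := hS.1
  apply hxy
  have e : ∀ z : α, z = M.zero := by
    intro z
    have := hM.odot_one z
    rw [← h, odot_zero hM] at this
    exact this.symm
  rw [e x, e y]

lemma powCong_isCong (a : α) :
    IsMVCong M (fun x y => ∃ n, mle M (mpow M a n) (dd M x y)) := by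
  have key : ∀ {m n x y u v}, mle M (mpow M a m) (dd M x y) → mle M (mpow M a n) (dd M u v) →
      mle M (mpow M a (m + n))
        (M.odot (M.odot (M.impl x y) (M.impl u v)) (M.odot (M.impl y x) (M.impl v u))) := by
    intro m n x y u v h1 h2
    rw [mpow_add hM]
    have := odot_mono hM h1 h2
    unfold dd at this
    rwa [odot4_swap hM] at this
  refine ⟨⟨?_, ?_, ?_⟩, ?_, ?_, ?_, ?_⟩
  · intro x
    exact ⟨0, by unfold dd; rw [impl_self hM, hM.odot_one]; exact mle_refl hM _⟩
  · rintro x y ⟨n, h⟩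
    exact ⟨n, by unfold dd at *; rwa [hM.odot_comm]⟩
  · rintro x y z ⟨m, h1⟩ ⟨n, h2⟩
    refine ⟨m + n, ?_⟩
    have step := key h1 h2
    have c1 : mle M (M.odot (M.odot (M.impl x y) (M.impl y z)) (M.odot (M.impl y x) (M.impl z y)))
        (dd M x z) := by
      unfold dd
      have r1 := impl_trans_odot hM x y z
      have r2 : mle M (M.odot (M.impl y x) (M.impl z y)) (M.impl z x) := by
        rw [hM.odot_comm]; exact impl_trans_odot hM z y x
      exact odot_mono hM r1 r2
    exact mle_trans hM step c1
  · rintro x y u v ⟨m, h1⟩ ⟨n, h2⟩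
    exact ⟨m + n, mle_trans hM (key h1 h2)
      (odot_mono hM (imp_meet hM x y u v) (imp_meet hM y x v u))⟩
  · rintro x y u v ⟨m, h1⟩ ⟨n, h2⟩
    exact ⟨m + n, mle_trans hM (key h1 h2)
      (odot_mono hM (imp_join hM x y u v) (imp_join hM y x v u))⟩
  · rintro x y u v ⟨m, h1⟩ ⟨n, h2⟩
    exact ⟨m + n, mle_trans hM (key h1 h2)
      (odot_mono hM (imp_odot2 hM x y u v) (imp_odot2 hM y x v u))⟩
  · rintro x y u v ⟨m, h1⟩ ⟨n, h2⟩
    refine ⟨m + n, ?_⟩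
    have step : mle M (mpow M a (m + n))
        (M.odot (M.odot (M.impl y x) (M.impl u v)) (M.odot (M.impl x y) (M.impl v u))) := by
      rw [mpow_add hM]
      have h1' : mle M (mpow M a m)
          (M.odot (M.impl y x) (M.impl x y)) := by
        unfold dd at h1; rwa [hM.odot_comm] at h1
      unfold dd at h2
      have := odot_mono hM h1' h2
      rwa [odot4_swap hM] at this
    exact mle_trans hM step
      (odot_mono hM (imp_impl hM x y u v) (imp_impl hM y x v u))

lemma nilpotent_of_ne_one (hS : IsSimpleMV M) {a : α} (ha : a ≠ M.one) :
    ∃ n, mpow M a n = M.zero := by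
  rcases hS.2 _ (powCong_isCong hM a) with h | h
  · exfalso
    apply ha
    rw [← h a M.one]
    exact ⟨1, by rw [mpow_one_eq hM, dd_one_right hM]; exact mle_refl hM a⟩
  · obtain ⟨n, hn⟩ := h M.one M.zero
    refine ⟨n, ?_⟩
    rw [← mle_zero_iff hM]
    unfold dd at hn
    rwa [one_impl hM, impl_eq_one_of_mle hM (zero_mle hM M.one), hM.odot_one] at hn

lemma join_one_left (y : α) : M.join M.one y = M.one := by
  rw [hM.join_comm]; exact (join_eq_iff_mle hM).mp (mle_one hM y)

lemma join_pow_one {x y : α} (h : M.join x y = M.one) (n : ℕ) :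
    M.join (mpow M x n) y = M.one := by
  induction n with
  | zero => show M.join M.one y = M.one; exact join_one_left hM y
  | succ n ih =>
    rw [← mle_one_iff hM]
    have e1 : M.odot (M.join (mpow M x n) y) (M.join x y) = M.one := by
      rw [ih, h, hM.odot_one]
    rw [← e1]
    rw [odot_join_distrib hM, hM.odot_comm _ x, odot_join_distrib hM]
    apply join_mle hM
    · apply join_mle hM
      · rw [hM.odot_comm x (mpow M x n)]
        exact mle_join_left hM _ _
      · exact mle_trans hM (odot_mle_right hM x y) (mle_join_right hM _ _)
    · exact mle_trans hM (odot_mle_right hM _ _) (mle_join_right hM _ _)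

lemma join_pow_pow {x y : α} (h : M.join x y = M.one) (n : ℕ) :
    M.join (mpow M x n) (mpow M y n) = M.one := by
  have h1 := join_pow_one hM h n
  rw [hM.join_comm] at h1
  have h2 := join_pow_one hM h1 n
  rw [hM.join_comm] at h2
  exact h2

lemma mle_total (hS : IsSimpleMV M) (x y : α) : mle M x y ∨ mle M y x := by
  by_cases hxy : M.impl x y = M.one
  · exact Or.inl (mle_of_impl_eq_one hM hxy)
  · obtain ⟨n, hn⟩ := nilpotent_of_ne_one hM hS hxy
    have hj := join_pow_pow hM (hM.ax7 x y) n
    rw [hn, hM.join_comm] at hj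
    rw [hM.join_zero] at hj
    cases n with
    | zero => exact absurd hn.symm (zero_ne_one hM hS)
    | succ n =>
      right
      apply mle_of_impl_eq_one hM
      rw [← mle_one_iff hM, ← hj]
      exact mpow_succ_mle hM _ _
end Basic


section Chain
variable (hM : IsMVAlgebra M)
include hM

lemma oplus_sub_eq_join' (x y : α) :
    M.oplus (M.neg x) (M.odot x y) = M.join (M.neg x) y := by
  have h := oplus_sub_eq_join hM (M.neg x) y
  rw [neg_neg hM, hM.odot_comm y x] at h
  exact h

lemma chainB {a b c : α} (ha : mle M a (M.neg b)) (hb : mle M (M.neg b) c) :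
    M.odot (M.oplus a b) c = M.oplus a (M.odot b c) := by
  have hcb : mle M (M.neg c) b := by
    have := neg_anti hM hb; rwa [neg_neg hM] at this
  have h1 : M.oplus (M.odot (M.oplus a b) c) (M.neg c) = M.oplus a b := by
    have := add_sub_cancel hM (x := M.oplus a b) (y := M.neg c)
      (mle_trans hM hcb (mle_oplus_right hM a b))
    rwa [neg_neg hM] at this
  have h2 : M.oplus (M.oplus a (M.odot b c)) (M.neg c) = M.oplus a b := by
    rw [oplus_assoc hM]
    congr 1
    have := add_sub_cancel hM (x := b) (y := M.neg c) hcb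
    rwa [neg_neg hM] at this
  apply oplus_cancel hM (h1.trans h2.symm)
  · rw [neg_neg hM]; exact odot_mle_right hM _ _
  · rw [neg_neg hM]
    have s1 : mle M (M.oplus a (M.odot b c)) (M.oplus (M.neg b) (M.odot b c)) :=
      oplus_mono hM ha (mle_refl hM _)
    have s3 : M.join (M.neg b) c = c := (join_eq_iff_mle hM).mp hb
    have e : M.oplus (M.neg b) (M.odot b c) = c := by
      rw [oplus_sub_eq_join' hM b c, s3]
    rwa [e] at s1

lemma chainE {a b c : α} (h1 : mle M (M.neg a) b) (h2 : mle M b (M.neg c)) :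
    M.oplus (M.odot a b) c = M.odot a (M.oplus b c) := by
  have hb : mle M (M.neg a) (M.neg (M.neg b)) := by rwa [neg_neg hM]
  have hc : mle M (M.neg (M.neg b)) (M.neg c) := by rwa [neg_neg hM]
  have key := congrArg M.neg (chainB hM hb hc)
  simp only [neg_odot hM, neg_oplus hM, neg_neg hM] at key
  exact key

lemma chainA (hS : IsSimpleMV M) {a b c : α}
    (ha : mle M a (M.neg b)) (hc : mle M c (M.neg b)) :
    M.odot (M.oplus a b) c = M.odot a (M.oplus b c) := by
  have hba : mle M b (M.neg a) := (mle_neg_iff hM).mp ha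
  have hbc : mle M b (M.neg c) := (mle_neg_iff hM).mp hc
  rcases mle_total hM hS (M.neg c) (M.oplus a b) with h | h
  swap
  · -- a⊕b ≤ ¬c : both sides are zero
    have hL : M.odot (M.oplus a b) c = M.zero := (odot_eq_zero_iff hM).mpr h
    have e : M.oplus b (M.neg (M.oplus a b)) = M.neg a := by
      rw [neg_oplus hM, oplus_sub_eq_join hM b (M.neg a)]
      exact (join_eq_iff_mle hM).mp hba
    have hstep : mle M (M.oplus b c) (M.neg a) := by
      have s := oplus_mono hM (mle_refl hM b) ((mle_neg_iff hM).mp h)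
      rwa [e] at s
    have hR : M.odot a (M.oplus b c) = M.zero := by
      rw [odot_eq_zero_iff hM]
      exact (mle_neg_iff hM).mp hstep
    rw [hL, hR]
  · rcases mle_total hM hS (M.neg (M.oplus b c)) a with h2 | h2
    swap
    · -- a ≤ ¬(b⊕c) : both sides are zero
      have hR : M.odot a (M.oplus b c) = M.zero := (odot_eq_zero_iff hM).mpr h2
      have e : M.oplus b (M.neg (M.oplus b c)) = M.neg c := by
        rw [neg_oplus hM, hM.odot_comm, oplus_sub_eq_join hM b (M.neg c)]
        exact (join_eq_iff_mle hM).mp hbc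
      have hstep : mle M (M.oplus a b) (M.neg c) := by
        have s := oplus_mono hM (mle_refl hM b) h2
        rw [e] at s
        rw [oplus_comm hM]
        exact s
      have hL : M.odot (M.oplus a b) c = M.zero := (odot_eq_zero_iff hM).mpr hstep
      rw [hL, hR]
    · -- main case
      have h1L : M.oplus (M.odot (M.oplus a b) c) (M.neg c) = M.oplus a b := by
        have := add_sub_cancel hM (x := M.oplus a b) (y := M.neg c) h
        rwa [neg_neg hM] at this
      have e_b : M.odot (M.neg c) (M.oplus b c) = b := by
        rw [hM.odot_comm]
        exact sub_add_cancel hM hbc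
      have e_c : M.oplus b (M.neg (M.oplus b c)) = M.neg c := by
        have hdc : mle M (M.neg (M.oplus b c)) (M.neg c) :=
          neg_anti hM (mle_oplus_right hM b c)
        have := add_sub_cancel hM (x := M.neg c) (y := M.neg (M.oplus b c)) hdc
        rw [neg_neg hM, e_b] at this
        exact this
      have h1R : M.oplus (M.odot a (M.oplus b c)) (M.neg c) = M.oplus a b := by
        rw [← e_c, oplus_comm hM b (M.neg (M.oplus b c)), ← oplus_assoc hM]
        congr 1
        have := add_sub_cancel hM (x := a) (y := M.neg (M.oplus b c)) h2
        rwa [neg_neg hM] at this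
      have hv : mle M (M.odot a (M.oplus b c)) c := by
        have s1 : mle M (M.odot a (M.oplus b c)) (M.odot (M.neg b) (M.oplus b c)) :=
          odot_mono hM ha (mle_refl hM _)
        have e : M.odot (M.neg b) (M.oplus b c) = c := by
          rw [hM.odot_comm, oplus_comm hM]
          exact sub_add_cancel hM hc
        rwa [e] at s1
      apply oplus_cancel hM (h1L.trans h1R.symm)
      · rw [neg_neg hM]; exact odot_mle_right hM _ _
      · rw [neg_neg hM]; exact hv

lemma chainD (hS : IsSimpleMV M) {a b c : α}
    (h1 : mle M (M.neg b) a) (h2 : mle M (M.neg b) c) :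
    M.oplus (M.odot a b) c = M.oplus a (M.odot b c) := by
  have g1 : mle M (M.neg a) (M.neg (M.neg b)) := neg_anti hM h1
  have g2 : mle M (M.neg c) (M.neg (M.neg b)) := neg_anti hM h2
  have key := congrArg M.neg (chainA hM hS g1 g2)
  simp only [neg_odot hM, neg_oplus hM, neg_neg hM] at key
  exact key

end Chain


section Chang
open scoped Classical

/-- underlying type of the Chang monoid -/
abbrev Gtype (M : MVOps α) := ℕ × {a : α // a ≠ M.one}

lemma odot_ne_one (hM : IsMVAlgebra M) {a : α} (ha : a ≠ M.one) (b : α) : M.odot a b ≠ M.one := by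
  intro h
  apply ha
  have h1 := odot_mle_left hM a b
  rw [h] at h1
  exact ((mle_one_iff hM).mp h1)

/-- Chang addition -/
noncomputable def addG (hM : IsMVAlgebra M) (g h : Gtype M) : Gtype M :=
  if hov : M.oplus g.2.1 h.2.1 = M.one then
    (g.1 + h.1 + 1, ⟨M.odot g.2.1 h.2.1, odot_ne_one hM g.2.2 h.2.1⟩)
  else (g.1 + h.1, ⟨M.oplus g.2.1 h.2.1, hov⟩)

lemma addG_pos (hM : IsMVAlgebra M) {m n : ℕ} {a b : α} {ha : a ≠ M.one} {hb : b ≠ M.one}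
    (hov : M.oplus a b = M.one) :
    addG hM (m, ⟨a, ha⟩) (n, ⟨b, hb⟩)
      = (m + n + 1, ⟨M.odot a b, odot_ne_one hM ha b⟩) := by
  unfold addG; exact dif_pos hov

lemma addG_neg (hM : IsMVAlgebra M) {m n : ℕ} {a b : α} {ha : a ≠ M.one} {hb : b ≠ M.one}
    (hov : M.oplus a b ≠ M.one) :
    addG hM (m, ⟨a, ha⟩) (n, ⟨b, hb⟩) = (m + n, ⟨M.oplus a b, hov⟩) := by
  unfold addG; exact dif_neg hov

lemma addG_comm (hM : IsMVAlgebra M) (g h : Gtype M) : addG hM g h = addG hM h g := by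
  obtain ⟨m, a, ha⟩ := g
  obtain ⟨n, b, hb⟩ := h
  by_cases hov : M.oplus a b = M.one
  · rw [addG_pos hM hov, addG_pos hM (by rwa [oplus_comm hM] at hov)]
    refine Prod.ext (by omega) (Subtype.ext ?_)
    exact hM.odot_comm a b
  · rw [addG_neg hM hov, addG_neg hM (by rwa [oplus_comm hM] at hov)]
    refine Prod.ext (by omega) (Subtype.ext ?_)
    exact oplus_comm hM a b

lemma mle_neg_of_not_ov (hM : IsMVAlgebra M) (hS : IsSimpleMV M) {a b : α} (h : M.oplus a b ≠ M.one) : mle M a (M.neg b) := by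
  rcases mle_total hM hS (M.neg a) b with hh | hh
  · exact absurd ((oplus_eq_one_iff hM).mpr hh) h
  · exact (mle_neg_iff hM).mp hh

lemma ov_symm_mle (hM : IsMVAlgebra M) {a b : α} (h : M.oplus a b = M.one) : mle M (M.neg b) a :=
  (oplus_eq_one_iff hM).mp (by rwa [oplus_comm hM] at h)

lemma addG_assoc (hM : IsMVAlgebra M) (hS : IsSimpleMV M) (g h k : Gtype M) :
    addG hM (addG hM g h) k = addG hM g (addG hM h k) := by
  obtain ⟨m, a, ha⟩ := g
  obtain ⟨n, b, hb⟩ := h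
  obtain ⟨p, c, hc⟩ := k
  by_cases P1 : M.oplus a b = M.one
  · by_cases Q1 : M.oplus b c = M.one
    · -- region IV
      have hD : M.oplus (M.odot a b) c = M.oplus a (M.odot b c) :=
        chainD hM hS (ov_symm_mle hM P1) ((oplus_eq_one_iff hM).mp Q1)
      rw [addG_pos hM P1, addG_pos hM Q1]
      by_cases P2 : M.oplus (M.odot a b) c = M.one
      · rw [addG_pos hM P2, addG_pos hM (by rwa [hD] at P2)]
        refine Prod.ext (by omega) (Subtype.ext ?_)
        exact hM.odot_assoc a b c
      · rw [addG_neg hM P2, addG_neg hM (by rwa [hD] at P2)]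
        refine Prod.ext (by omega) (Subtype.ext ?_)
        exact hD
    · -- region III
      have hE : M.oplus (M.odot a b) c = M.odot a (M.oplus b c) := by
        apply chainE hM ((oplus_eq_one_iff hM).mp P1)
        exact (mle_neg_iff hM).mp (mle_neg_of_not_ov hM hS (by rwa [oplus_comm hM]))
      have P2 : M.oplus (M.odot a b) c ≠ M.one := by
        intro hcon
        apply Q1
        have := oplus_mono hM (odot_mle_right hM a b) (mle_refl hM c)
        rw [hcon] at this
        exact (mle_one_iff hM).mp this
      have Q2 : M.oplus a (M.oplus b c) = M.one := by
        have := oplus_mono hM (mle_refl hM a) (mle_oplus_left hM b c)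
        rw [P1] at this
        exact (mle_one_iff hM).mp this
      rw [addG_pos hM P1, addG_neg hM Q1, addG_neg hM P2, addG_pos hM Q2]
      refine Prod.ext (by omega) (Subtype.ext ?_)
      exact hE
  · by_cases Q1 : M.oplus b c = M.one
    · -- region II
      have hB : M.odot (M.oplus a b) c = M.oplus a (M.odot b c) :=
        chainB hM (mle_neg_of_not_ov hM hS P1) ((oplus_eq_one_iff hM).mp Q1)
      have P2 : M.oplus (M.oplus a b) c = M.one := by
        have := oplus_mono hM (mle_oplus_right hM a b) (mle_refl hM c)
        rw [Q1] at this
        exact (mle_one_iff hM).mp this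
      have Q2 : M.oplus a (M.odot b c) ≠ M.one := by
        intro hcon
        apply P1
        have h1 : mle M (M.neg a) (M.odot b c) := (oplus_eq_one_iff hM).mp hcon
        have h2 : mle M (M.neg a) b := mle_trans hM h1 (odot_mle_left hM b c)
        exact (oplus_eq_one_iff hM).mpr h2
      rw [addG_neg hM P1, addG_pos hM Q1, addG_pos hM P2, addG_neg hM Q2]
      refine Prod.ext (by omega) (Subtype.ext ?_)
      exact hB
    · -- region I
      have hAssoc : M.oplus (M.oplus a b) c = M.oplus a (M.oplus b c) := oplus_assoc hM a b c
      rw [addG_neg hM P1, addG_neg hM Q1]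
      by_cases P2 : M.oplus (M.oplus a b) c = M.one
      · rw [addG_pos hM P2, addG_pos hM (by rwa [hAssoc] at P2)]
        refine Prod.ext (by omega) (Subtype.ext ?_)
        exact chainA hM hS (mle_neg_of_not_ov hM hS P1)
          (mle_neg_of_not_ov hM hS (by rwa [oplus_comm hM]))
      · rw [addG_neg hM P2, addG_neg hM (by rwa [hAssoc] at P2)]
        refine Prod.ext (by omega) (Subtype.ext ?_)
        exact hAssoc

/-- zero of the Chang monoid -/
noncomputable def zeroG (hM : IsMVAlgebra M) (hS : IsSimpleMV M) : Gtype M :=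
  (0, ⟨M.zero, zero_ne_one hM hS⟩)

/-- the strong unit -/
noncomputable def uG (hM : IsMVAlgebra M) (hS : IsSimpleMV M) : Gtype M :=
  (1, ⟨M.zero, zero_ne_one hM hS⟩)

lemma addG_zeroG (hM : IsMVAlgebra M) (hS : IsSimpleMV M) (g : Gtype M) : addG hM g (zeroG hM hS) = g := by
  obtain ⟨m, a, ha⟩ := g
  have hov : M.oplus a M.zero ≠ M.one := by rw [oplus_zero hM]; exact ha
  rw [zeroG, addG_neg hM hov]
  refine Prod.ext (by omega) (Subtype.ext ?_)
  exact oplus_zero hM a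

lemma zeroG_addG (hM : IsMVAlgebra M) (hS : IsSimpleMV M) (g : Gtype M) : addG hM (zeroG hM hS) g = g := by
  rw [addG_comm hM]; exact addG_zeroG hM hS g

/-- the order -/
def leG (M : MVOps α) (g h : Gtype M) : Prop :=
  g.1 < h.1 ∨ (g.1 = h.1 ∧ mle M g.2.1 h.2.1)

lemma leG_refl (hM : IsMVAlgebra M) (g : Gtype M) : leG M g g := Or.inr ⟨rfl, mle_refl hM _⟩

lemma leG_trans (hM : IsMVAlgebra M) {g h k : Gtype M} (h1 : leG M g h) (h2 : leG M h k) : leG M g k := by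
  rcases h1 with h1 | ⟨e1, v1⟩ <;> rcases h2 with h2 | ⟨e2, v2⟩
  · exact Or.inl (h1.trans h2)
  · exact Or.inl (e2 ▸ h1)
  · exact Or.inl (e1 ▸ h2)
  · exact Or.inr ⟨e1.trans e2, mle_trans hM v1 v2⟩

lemma leG_antisymm (hM : IsMVAlgebra M) {g h : Gtype M} (h1 : leG M g h) (h2 : leG M h g) : g = h := by
  rcases h1 with h1 | ⟨e1, v1⟩ <;> rcases h2 with h2 | ⟨e2, v2⟩ <;> try omega
  exact Prod.ext e1 (Subtype.ext (mle_antisymm hM v1 v2))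

lemma leG_total (hM : IsMVAlgebra M) (hS : IsSimpleMV M) (g h : Gtype M) : leG M g h ∨ leG M h g := by
  rcases Nat.lt_trichotomy g.1 h.1 with hh | hh | hh
  · exact Or.inl (Or.inl hh)
  · rcases mle_total hM hS g.2.1 h.2.1 with hv | hv
    · exact Or.inl (Or.inr ⟨hh, hv⟩)
    · exact Or.inr (Or.inr ⟨hh.symm, hv⟩)
  · exact Or.inr (Or.inl hh)

lemma addG_mono_right (hM : IsMVAlgebra M) (hS : IsSimpleMV M) {g h : Gtype M} (k : Gtype M) (hgh : leG M g h) :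
    leG M (addG hM g k) (addG hM h k) := by
  obtain ⟨m, a, ha⟩ := g
  obtain ⟨n, b, hb⟩ := h
  obtain ⟨p, c, hc⟩ := k
  by_cases hac : M.oplus a c = M.one <;> by_cases hbc : M.oplus b c = M.one
  · rw [addG_pos hM hac, addG_pos hM hbc]
    rcases hgh with hlt | ⟨heq, hv⟩
    · exact Or.inl (by simp only; omega)
    · exact Or.inr ⟨by simp only; omega, odot_mono hM hv (mle_refl hM c)⟩
  · rw [addG_pos hM hac, addG_neg hM hbc]
    rcases hgh with hlt | ⟨heq, hv⟩
    · -- m < n, so m+p+1 ≤ n+p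
      rcases Nat.lt_or_ge (m+p+1) (n+p) with hh | hh
      · exact Or.inl (by simp only; omega)
      · refine Or.inr ⟨by simp only; omega, ?_⟩
        exact mle_trans hM (odot_mle_right hM a c) (mle_oplus_right hM b c)
    · exfalso
      apply hbc
      have := oplus_mono hM hv (mle_refl hM c)
      rw [hac] at this
      exact (mle_one_iff hM).mp this
  · rw [addG_neg hM hac, addG_pos hM hbc]
    rcases hgh with hlt | ⟨heq, hv⟩
    · exact Or.inl (by simp only; omega)
    · exact Or.inl (by simp only; omega)
  · rw [addG_neg hM hac, addG_neg hM hbc]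
    rcases hgh with hlt | ⟨heq, hv⟩
    · exact Or.inl (by simp only; omega)
    · exact Or.inr ⟨by simp only; omega, oplus_mono hM hv (mle_refl hM c)⟩

lemma addG_mono (hM : IsMVAlgebra M) (hS : IsSimpleMV M) {g h k l : Gtype M} (h1 : leG M g h) (h2 : leG M k l) :
    leG M (addG hM g k) (addG hM h l) := by
  have s1 := addG_mono_right hM hS k h1
  have s2 := addG_mono_right hM hS h h2
  rw [addG_comm hM k h, addG_comm hM l h] at s2
  exact leG_trans hM s1 s2

lemma addG_cancel (hM : IsMVAlgebra M) (hS : IsSimpleMV M) {g h k : Gtype M} (he : addG hM g k = addG hM h k) : g = h := by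
  obtain ⟨m, a, ha⟩ := g
  obtain ⟨n, b, hb⟩ := h
  obtain ⟨p, c, hc⟩ := k
  have mixed : ∀ (x : α), x ≠ M.one → M.oplus x c = M.one →
      ∀ (y : α), M.oplus y c ≠ M.one → M.odot x c ≠ M.oplus y c := by
    intro x hx hxc y hyc hcon
    have e1 : M.odot x c = c := by
      apply mle_antisymm hM (odot_mle_right hM x c)
      rw [hcon]
      exact mle_oplus_right hM y c
    apply hx
    have := add_sub_cancel hM (x := x) (y := M.neg c) (ov_symm_mle hM hxc)
    rw [neg_neg hM, e1, oplus_neg_self hM] at this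
    exact this.symm
  by_cases hac : M.oplus a c = M.one <;> by_cases hbc : M.oplus b c = M.one
  · rw [addG_pos hM hac, addG_pos hM hbc] at he
    have e1 : m = n := by
      have := congrArg Prod.fst he
      simpa using this
    have e2 : M.odot a c = M.odot b c := congrArg (fun x => (x.2 : {a : α // a ≠ M.one}).1) he
    refine Prod.ext e1 (Subtype.ext ?_)
    have ea := add_sub_cancel hM (x := a) (y := M.neg c) (ov_symm_mle hM hac)
    have eb := add_sub_cancel hM (x := b) (y := M.neg c) (ov_symm_mle hM hbc)
    rw [neg_neg hM] at ea eb
    show a = b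
    rw [← ea, ← eb, e2]
  · rw [addG_pos hM hac, addG_neg hM hbc] at he
    exact absurd (congrArg (fun x => (x.2 : {a : α // a ≠ M.one}).1) he)
      (mixed a ha hac b hbc)
  · rw [addG_neg hM hac, addG_pos hM hbc] at he
    exact absurd (congrArg (fun x => (x.2 : {a : α // a ≠ M.one}).1) he).symm
      (mixed b hb hbc a hac)
  · rw [addG_neg hM hac, addG_neg hM hbc] at he
    have e1 : m = n := by
      have := congrArg Prod.fst he
      simpa using this
    have e2 : M.oplus a c = M.oplus b c := congrArg (fun x => (x.2 : {a : α // a ≠ M.one}).1) he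
    refine Prod.ext e1 (Subtype.ext ?_)
    have ea := sub_add_cancel hM (mle_neg_of_not_ov hM hS hac)
    have eb := sub_add_cancel hM (mle_neg_of_not_ov hM hS hbc)
    show a = b
    rw [← ea, ← eb, e2]

noncomputable def nsmulG (hM : IsMVAlgebra M) (hS : IsSimpleMV M) : ℕ → Gtype M → Gtype M
  | 0, _ => zeroG hM hS
  | n + 1, g => addG hM (nsmulG hM hS n g) g

lemma nsmulG_zero (hM : IsMVAlgebra M) (hS : IsSimpleMV M) (g : Gtype M) :
    nsmulG hM hS 0 g = zeroG hM hS := rfl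

lemma nsmulG_succ (hM : IsMVAlgebra M) (hS : IsSimpleMV M) (n : ℕ) (g : Gtype M) :
    nsmulG hM hS (n + 1) g = addG hM (nsmulG hM hS n g) g := rfl

lemma nsmulG_one (hM : IsMVAlgebra M) (hS : IsSimpleMV M) (g : Gtype M) :
    nsmulG hM hS 1 g = g := by
  rw [nsmulG_succ, nsmulG_zero, zeroG_addG hM hS]

lemma nsmulG_add (hM : IsMVAlgebra M) (hS : IsSimpleMV M) (m n : ℕ) (g : Gtype M) :
    nsmulG hM hS (m + n) g = addG hM (nsmulG hM hS m g) (nsmulG hM hS n g) := by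
  induction n with
  | zero => rw [Nat.add_zero, nsmulG_zero, addG_zeroG hM hS]
  | succ n ih =>
    rw [show m + (n+1) = (m+n) + 1 from rfl, nsmulG_succ, nsmulG_succ, ih,
      addG_assoc hM hS]

lemma nsmulG_mul (hM : IsMVAlgebra M) (hS : IsSimpleMV M) (m n : ℕ) (g : Gtype M) :
    nsmulG hM hS (m * n) g = nsmulG hM hS m (nsmulG hM hS n g) := by
  induction m with
  | zero => rw [Nat.zero_mul, nsmulG_zero, nsmulG_zero]
  | succ m ih =>
    rw [Nat.succ_mul, nsmulG_add hM hS, ih, nsmulG_succ]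

lemma addG4_swap (hM : IsMVAlgebra M) (hS : IsSimpleMV M) (p q r t : Gtype M) :
    addG hM (addG hM p q) (addG hM r t) = addG hM (addG hM p r) (addG hM q t) := by
  rw [addG_assoc hM hS, addG_assoc hM hS]
  congr 1
  rw [← addG_assoc hM hS, ← addG_assoc hM hS, addG_comm hM q r]

lemma nsmulG_addG (hM : IsMVAlgebra M) (hS : IsSimpleMV M) (n : ℕ) (g h : Gtype M) :
    nsmulG hM hS n (addG hM g h) = addG hM (nsmulG hM hS n g) (nsmulG hM hS n h) := by
  induction n with
  | zero => rw [nsmulG_zero, nsmulG_zero, nsmulG_zero, addG_zeroG hM hS]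
  | succ n ih =>
    rw [nsmulG_succ, ih, nsmulG_succ, nsmulG_succ, addG4_swap hM hS]

lemma nsmulG_mono (hM : IsMVAlgebra M) (hS : IsSimpleMV M) {g h : Gtype M} (n : ℕ)
    (hg : leG M g h) : leG M (nsmulG hM hS n g) (nsmulG hM hS n h) := by
  induction n with
  | zero => exact leG_refl hM _
  | succ n ih => rw [nsmulG_succ, nsmulG_succ]; exact addG_mono hM hS ih hg

lemma nsmulG_uG (hM : IsMVAlgebra M) (hS : IsSimpleMV M) (k : ℕ) :
    nsmulG hM hS k (uG hM hS) = (k, ⟨M.zero, zero_ne_one hM hS⟩) := by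
  induction k with
  | zero => rfl
  | succ k ih =>
    rw [nsmulG_succ, ih, uG]
    have hov : M.oplus M.zero M.zero ≠ M.one := by
      rw [oplus_zero hM]; exact zero_ne_one hM hS
    rw [addG_neg hM hov]
    exact Prod.ext (by omega) (Subtype.ext (oplus_zero hM M.zero))

lemma nat_of_leG (hM : IsMVAlgebra M) (hS : IsSimpleMV M) {k l : ℕ}
    (h : leG M (nsmulG hM hS k (uG hM hS)) (nsmulG hM hS l (uG hM hS))) : k ≤ l := by
  rw [nsmulG_uG, nsmulG_uG] at h
  rcases h with h | ⟨e, _⟩ <;> omega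

lemma leG_of_nat (hM : IsMVAlgebra M) (hS : IsSimpleMV M) {k l : ℕ} (h : k ≤ l) :
    leG M (nsmulG hM hS k (uG hM hS)) (nsmulG hM hS l (uG hM hS)) := by
  rw [nsmulG_uG, nsmulG_uG]
  rcases Nat.lt_or_ge k l with hh | hh
  · exact Or.inl hh
  · exact Or.inr ⟨by omega, mle_refl hM _⟩

lemma zeroG_leG (hM : IsMVAlgebra M) (hS : IsSimpleMV M) (g : Gtype M) :
    leG M (zeroG hM hS) g := by
  obtain ⟨m, a, ha⟩ := g
  rcases Nat.eq_zero_or_pos m with h | h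
  · subst h; exact Or.inr ⟨rfl, zero_mle hM a⟩
  · exact Or.inl h

lemma leG_unit_bound (hM : IsMVAlgebra M) (hS : IsSimpleMV M) (g : Gtype M) :
    leG M g (nsmulG hM hS (g.1 + 1) (uG hM hS)) := by
  rw [nsmulG_uG]
  exact Or.inl (by omega)

/-- lower rational set -/
def Sset (hM : IsMVAlgebra M) (hS : IsSimpleMV M) (g : Gtype M) : Set ℝ :=
  {x | ∃ m n : ℕ, 0 < n ∧
    leG M (nsmulG hM hS m (uG hM hS)) (nsmulG hM hS n g) ∧ x = (m : ℝ) / n}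

/-- upper rational set -/
def Uset (hM : IsMVAlgebra M) (hS : IsSimpleMV M) (g : Gtype M) : Set ℝ :=
  {x | ∃ m n : ℕ, 0 < n ∧
    leG M (nsmulG hM hS n g) (nsmulG hM hS m (uG hM hS)) ∧ x = (m : ℝ) / n}

noncomputable def phi (hM : IsMVAlgebra M) (hS : IsSimpleMV M) (g : Gtype M) : ℝ :=
  sSup (Sset hM hS g)

lemma zero_mem_S (hM : IsMVAlgebra M) (hS : IsSimpleMV M) (g : Gtype M) :
    (0 : ℝ) ∈ Sset hM hS g := by
  refine ⟨0, 1, Nat.one_pos, ?_, by norm_num⟩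
  rw [nsmulG_zero]
  exact zeroG_leG hM hS _

lemma S_nonempty (hM : IsMVAlgebra M) (hS : IsSimpleMV M) (g : Gtype M) :
    (Sset hM hS g).Nonempty := ⟨0, zero_mem_S hM hS g⟩

lemma mem_S_le (hM : IsMVAlgebra M) (hS : IsSimpleMV M) (g : Gtype M) {x : ℝ}
    (hx : x ∈ Sset hM hS g) : x ≤ (g.1 : ℝ) + 1 := by
  obtain ⟨m, n, hn, hle, rfl⟩ := hx
  have b1 : leG M (nsmulG hM hS n g) (nsmulG hM hS (n * (g.1 + 1)) (uG hM hS)) := by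
    rw [nsmulG_mul hM hS]
    exact nsmulG_mono hM hS n (leG_unit_bound hM hS g)
  have b2 : m ≤ n * (g.1 + 1) := nat_of_leG hM hS (leG_trans hM hle b1)
  rw [div_le_iff₀ (by exact_mod_cast hn)]
  calc (m : ℝ) ≤ (n * (g.1 + 1) : ℕ) := by exact_mod_cast b2
    _ = ((g.1 : ℝ) + 1) * n := by push_cast; ring

lemma bddAbove_S (hM : IsMVAlgebra M) (hS : IsSimpleMV M) (g : Gtype M) :
    BddAbove (Sset hM hS g) :=
  ⟨(g.1 : ℝ) + 1, fun _ hx => mem_S_le hM hS g hx⟩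

lemma phi_nonneg (hM : IsMVAlgebra M) (hS : IsSimpleMV M) (g : Gtype M) :
    0 ≤ phi hM hS g :=
  le_csSup (bddAbove_S hM hS g) (zero_mem_S hM hS g)

lemma phi_mono (hM : IsMVAlgebra M) (hS : IsSimpleMV M) {g h : Gtype M} (hgh : leG M g h) :
    phi hM hS g ≤ phi hM hS h := by
  apply csSup_le_csSup (bddAbove_S hM hS h) (S_nonempty hM hS g)
  rintro x ⟨m, n, hn, hle, rfl⟩
  exact ⟨m, n, hn, leG_trans hM hle (nsmulG_mono hM hS n hgh), rfl⟩

lemma nsmulG_zeroG (hM : IsMVAlgebra M) (hS : IsSimpleMV M) (n : ℕ) :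
    nsmulG hM hS n (zeroG hM hS) = zeroG hM hS := by
  induction n with
  | zero => rw [nsmulG_zero]
  | succ n ih => rw [nsmulG_succ, ih, addG_zeroG hM hS]

lemma phi_zeroG (hM : IsMVAlgebra M) (hS : IsSimpleMV M) : phi hM hS (zeroG hM hS) = 0 := by
  apply le_antisymm
  · apply csSup_le (S_nonempty hM hS _)
    rintro x ⟨m, n, hn, hle, rfl⟩
    rw [nsmulG_zeroG hM hS, nsmulG_uG] at hle
    have : m = 0 := by
      rcases hle with h | ⟨e, _⟩
      · exact absurd h (by rw [zeroG]; omega)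
      · rw [zeroG] at e; omega
    simp [this]
  · exact phi_nonneg hM hS _

lemma phi_uG (hM : IsMVAlgebra M) (hS : IsSimpleMV M) : phi hM hS (uG hM hS) = 1 := by
  apply le_antisymm
  · apply csSup_le (S_nonempty hM hS _)
    rintro x ⟨m, n, hn, hle, rfl⟩
    have : m ≤ n := nat_of_leG hM hS hle
    rw [div_le_one (by exact_mod_cast hn)]
    exact_mod_cast this
  · apply le_csSup (bddAbove_S hM hS _)
    exact ⟨1, 1, Nat.one_pos, leG_refl hM _, by norm_num⟩

lemma phi_superadd (hM : IsMVAlgebra M) (hS : IsSimpleMV M) (g h : Gtype M) :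
    phi hM hS g + phi hM hS h ≤ phi hM hS (addG hM g h) := by
  have key : ∀ x ∈ Sset hM hS g, ∀ y ∈ Sset hM hS h, x + y ∈ Sset hM hS (addG hM g h) := by
    rintro x ⟨m, n, hn, hle, rfl⟩ y ⟨m', n', hn', hle', rfl⟩
    refine ⟨m * n' + m' * n, n * n', Nat.mul_pos hn hn', ?_, ?_⟩
    · rw [nsmulG_add hM hS, nsmulG_addG hM hS]
      apply addG_mono hM hS
      · rw [show m * n' = n' * m by ring, nsmulG_mul hM hS,
          show n * n' = n' * n by ring, nsmulG_mul hM hS]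
        exact nsmulG_mono hM hS n' hle
      · rw [show m' * n = n * m' by ring, nsmulG_mul hM hS, nsmulG_mul hM hS]
        exact nsmulG_mono hM hS n hle'
    · have hn0 : (n : ℝ) ≠ 0 := by exact_mod_cast hn.ne'
      have hn'0 : (n' : ℝ) ≠ 0 := by exact_mod_cast hn'.ne'
      push_cast
      rw [div_add_div _ _ hn0 hn'0]
      ring
  apply add_le_of_le_sub_right
  apply csSup_le (S_nonempty hM hS g)
  intro x hx
  rw [le_sub_iff_add_le, add_comm]
  apply add_le_of_le_sub_right
  apply csSup_le (S_nonempty hM hS h)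
  intro y hy
  rw [le_sub_iff_add_le]
  have hsum : x + y ≤ phi hM hS (addG hM g h) :=
    le_csSup (bddAbove_S hM hS (addG hM g h)) (key x hx y hy)
  linarith

lemma S_le_U (hM : IsMVAlgebra M) (hS : IsSimpleMV M) (g : Gtype M) {x y : ℝ}
    (hx : x ∈ Sset hM hS g) (hy : y ∈ Uset hM hS g) : x ≤ y := by
  obtain ⟨m, n, hn, hle, rfl⟩ := hx
  obtain ⟨m', n', hn', hle', rfl⟩ := hy
  have c1 : leG M (nsmulG hM hS (n' * m) (uG hM hS)) (nsmulG hM hS (n * m') (uG hM hS)) := by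
    rw [nsmulG_mul hM hS, nsmulG_mul hM hS]
    refine leG_trans hM (nsmulG_mono hM hS n' hle) ?_
    rw [← nsmulG_mul hM hS, show n' * n = n * n' by ring, nsmulG_mul hM hS]
    exact nsmulG_mono hM hS n hle'
  have c2 : n' * m ≤ n * m' := nat_of_leG hM hS c1
  have c3 : m * n' ≤ m' * n := by
    calc m * n' = n' * m := by ring
      _ ≤ n * m' := c2
      _ = m' * n := by ring
  rw [div_le_div_iff₀ (by exact_mod_cast hn) (by exact_mod_cast hn')]
  exact_mod_cast c3

lemma U_approx (hM : IsMVAlgebra M) (hS : IsSimpleMV M) (g : Gtype M) (n : ℕ) (hn : 0 < n) :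
    ∃ y ∈ Uset hM hS g, y ≤ phi hM hS g + 1 / n := by
  have hex : ∃ m, leG M (nsmulG hM hS n g) (nsmulG hM hS m (uG hM hS)) := by
    refine ⟨n * (g.1 + 1), ?_⟩
    rw [nsmulG_mul hM hS]
    exact nsmulG_mono hM hS n (leG_unit_bound hM hS g)
  classical
  rcases Nat.eq_zero_or_pos (Nat.find hex) with h0 | h0
  · refine ⟨0, ⟨Nat.find hex, n, hn, Nat.find_spec hex, by rw [h0]; norm_num⟩, ?_⟩
    have := phi_nonneg hM hS g
    positivity
  · obtain ⟨m1, hm1⟩ : ∃ m1, Nat.find hex = m1 + 1 := ⟨Nat.find hex - 1, by omega⟩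
    have hnot := Nat.find_min hex (m := m1) (by omega)
    have hl : leG M (nsmulG hM hS m1 (uG hM hS)) (nsmulG hM hS n g) := by
      rcases leG_total hM hS (nsmulG hM hS n g) (nsmulG hM hS m1 (uG hM hS)) with hh | hh
      · exact absurd hh hnot
      · exact hh
    have hmem : ((m1 : ℝ)) / n ∈ Sset hM hS g := ⟨m1, n, hn, hl, rfl⟩
    refine ⟨((m1 + 1 : ℕ) : ℝ) / n, ⟨m1 + 1, n, hn, by rw [← hm1]; exact Nat.find_spec hex, rfl⟩, ?_⟩
    have h1 : ((m1 : ℝ)) / n ≤ phi hM hS g := le_csSup (bddAbove_S hM hS g) hmem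
    have hn0 : (0:ℝ) < (n : ℝ) := by exact_mod_cast hn
    rw [div_le_iff₀ hn0] at h1 ⊢
    push_cast
    push_cast at h1
    rw [add_mul]
    calc (m1 : ℝ) + 1 ≤ phi hM hS g * n + 1 := by linarith
      _ ≤ phi hM hS g * n + 1 / n * n := by
          rw [div_mul_cancel₀ _ hn0.ne']
      _ = _ := by ring

lemma phi_subadd (hM : IsMVAlgebra M) (hS : IsSimpleMV M) (g h : Gtype M) :
    phi hM hS (addG hM g h) ≤ phi hM hS g + phi hM hS h := by
  have key : ∀ y1 ∈ Uset hM hS g, ∀ y2 ∈ Uset hM hS h, ∀ x ∈ Sset hM hS (addG hM g h),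
      x ≤ y1 + y2 := by
    rintro y1 ⟨m, n, hn, hle, rfl⟩ y2 ⟨m', n', hn', hle', rfl⟩ x hx
    have hmem : ((m * n' + m' * n : ℕ) : ℝ) / ((n * n' : ℕ) : ℝ) ∈ Uset hM hS (addG hM g h) := by
      refine ⟨m * n' + m' * n, n * n', Nat.mul_pos hn hn', ?_, rfl⟩
      rw [nsmulG_add hM hS, nsmulG_addG hM hS]
      apply addG_mono hM hS
      · rw [show n * n' = n' * n by ring, nsmulG_mul hM hS,
          show m * n' = n' * m by ring, nsmulG_mul hM hS]
        exact nsmulG_mono hM hS n' hle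
      · rw [show m' * n = n * m' by ring, nsmulG_mul hM hS, nsmulG_mul hM hS]
        exact nsmulG_mono hM hS n hle'
    have := S_le_U hM hS (addG hM g h) hx hmem
    refine this.trans (le_of_eq ?_)
    have hn0 : (n : ℝ) ≠ 0 := by exact_mod_cast hn.ne'
    have hn'0 : (n' : ℝ) ≠ 0 := by exact_mod_cast hn'.ne'
    push_cast
    rw [div_add_div _ _ hn0 hn'0]
    ring
  have main : ∀ k : ℕ, 0 < k → phi hM hS (addG hM g h) ≤ phi hM hS g + phi hM hS h + 2 / k := by
    intro k hk
    obtain ⟨y1, hy1, hy1le⟩ := U_approx hM hS g k hk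
    obtain ⟨y2, hy2, hy2le⟩ := U_approx hM hS h k hk
    have : phi hM hS (addG hM g h) ≤ y1 + y2 := by
      apply csSup_le (S_nonempty hM hS _)
      intro x hx
      exact key y1 hy1 y2 hy2 x hx
    calc phi hM hS (addG hM g h) ≤ y1 + y2 := this
      _ ≤ (phi hM hS g + 1/k) + (phi hM hS h + 1/k) := add_le_add hy1le hy2le
      _ = phi hM hS g + phi hM hS h + 2/k := by ring
  by_contra hcon
  push_neg at hcon
  obtain ⟨k, hk⟩ := exists_nat_gt (2 / (phi hM hS (addG hM g h) - (phi hM hS g + phi hM hS h)))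
  have hd : 0 < phi hM hS (addG hM g h) - (phi hM hS g + phi hM hS h) := by linarith
  have hk0 : 0 < k := by
    by_contra hk0
    push_neg at hk0
    interval_cases k
    simp at hk
    nlinarith [div_pos (by norm_num : (0:ℝ) < 2) hd]
  have := main k hk0
  have h2 : 2 / (k : ℝ) < phi hM hS (addG hM g h) - (phi hM hS g + phi hM hS h) := by
    rw [div_lt_iff₀ (by exact_mod_cast hk0)]
    rw [div_lt_iff₀ hd] at hk
    nlinarith
  linarith

lemma phi_add (hM : IsMVAlgebra M) (hS : IsSimpleMV M) (g h : Gtype M) :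
    phi hM hS (addG hM g h) = phi hM hS g + phi hM hS h :=
  le_antisymm (phi_subadd hM hS g h) (phi_superadd hM hS g h)

/-- The real-valued embedding. -/
noncomputable def Fr (hM : IsMVAlgebra M) (hS : IsSimpleMV M) (a : α) : ℝ :=
  if h : a = M.one then 1 else phi hM hS (0, ⟨a, h⟩)

lemma Fr_one (hM : IsMVAlgebra M) (hS : IsSimpleMV M) : Fr hM hS M.one = 1 := dif_pos rfl

lemma Fr_of_ne (hM : IsMVAlgebra M) (hS : IsSimpleMV M) {a : α} (ha : a ≠ M.one) :
    Fr hM hS a = phi hM hS (0, ⟨a, ha⟩) := dif_neg ha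

lemma Fr_zero (hM : IsMVAlgebra M) (hS : IsSimpleMV M) : Fr hM hS M.zero = 0 := by
  rw [Fr_of_ne hM hS (zero_ne_one hM hS)]
  exact phi_zeroG hM hS

lemma Fr_nonneg (hM : IsMVAlgebra M) (hS : IsSimpleMV M) (a : α) : 0 ≤ Fr hM hS a := by
  by_cases ha : a = M.one
  · rw [ha, Fr_one]; norm_num
  · rw [Fr_of_ne hM hS ha]; exact phi_nonneg hM hS _

lemma Fr_le_one (hM : IsMVAlgebra M) (hS : IsSimpleMV M) (a : α) : Fr hM hS a ≤ 1 := by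
  by_cases ha : a = M.one
  · rw [ha, Fr_one]
  · rw [Fr_of_ne hM hS ha]
    have h1 : leG M (0, ⟨a, ha⟩) (uG hM hS) := Or.inl Nat.zero_lt_one
    have := phi_mono hM hS h1
    rwa [phi_uG hM hS] at this

lemma Fr_mono (hM : IsMVAlgebra M) (hS : IsSimpleMV M) {a b : α} (h : mle M a b) :
    Fr hM hS a ≤ Fr hM hS b := by
  by_cases hb : b = M.one
  · rw [hb, Fr_one]; exact Fr_le_one hM hS a
  · by_cases ha : a = M.one
    · exact absurd ((mle_one_iff hM).mp (ha ▸ h)) hb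
    · rw [Fr_of_ne hM hS ha, Fr_of_ne hM hS hb]
      exact phi_mono hM hS (Or.inr ⟨rfl, h⟩)

lemma phi_one_shift (hM : IsMVAlgebra M) (hS : IsSimpleMV M) {x : α} (hx : x ≠ M.one) :
    phi hM hS (1, ⟨x, hx⟩) = 1 + phi hM hS (0, ⟨x, hx⟩) := by
  have e : addG hM (uG hM hS) (0, ⟨x, hx⟩) = (1, ⟨x, hx⟩) := by
    have hov : M.oplus M.zero x ≠ M.one := by rwa [zero_oplus hM]
    rw [uG, addG_neg hM hov]
    exact Prod.ext rfl (Subtype.ext (zero_oplus hM x))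
  rw [← e, phi_add hM hS, phi_uG hM hS]

lemma Fr_ov (hM : IsMVAlgebra M) (hS : IsSimpleMV M) {a b : α} (ha : a ≠ M.one)
    (hb : b ≠ M.one) (hov : M.oplus a b = M.one) :
    Fr hM hS a + Fr hM hS b = 1 + Fr hM hS (M.odot a b) := by
  rw [Fr_of_ne hM hS ha, Fr_of_ne hM hS hb,
    Fr_of_ne hM hS (odot_ne_one hM ha b), ← phi_add hM hS]
  rw [addG_pos hM hov]
  exact phi_one_shift hM hS _

lemma Fr_nov (hM : IsMVAlgebra M) (hS : IsSimpleMV M) {a b : α} (ha : a ≠ M.one)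
    (hb : b ≠ M.one) (hov : M.oplus a b ≠ M.one) :
    Fr hM hS a + Fr hM hS b = Fr hM hS (M.oplus a b) := by
  rw [Fr_of_ne hM hS ha, Fr_of_ne hM hS hb, Fr_of_ne hM hS hov, ← phi_add hM hS,
    addG_neg hM hov]

lemma Fr_oplus (hM : IsMVAlgebra M) (hS : IsSimpleMV M) (a b : α) :
    Fr hM hS (M.oplus a b) = min 1 (Fr hM hS a + Fr hM hS b) := by
  by_cases ha : a = M.one
  · rw [ha, one_oplus hM, Fr_one]
    have := Fr_nonneg hM hS b
    rw [min_eq_left (by linarith)]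
  · by_cases hb : b = M.one
    · rw [hb, oplus_one hM, Fr_one]
      have := Fr_nonneg hM hS a
      rw [min_eq_left (by linarith)]
    · by_cases hov : M.oplus a b = M.one
      · rw [hov, Fr_one]
        rw [Fr_ov hM hS ha hb hov]
        have := Fr_nonneg hM hS (M.odot a b)
        rw [min_eq_left (by linarith)]
      · rw [← Fr_nov hM hS ha hb hov]
        have h1 : Fr hM hS a + Fr hM hS b ≤ 1 := by
          rw [Fr_nov hM hS ha hb hov]
          exact Fr_le_one hM hS _
        rw [min_eq_right h1]

lemma Fr_odot (hM : IsMVAlgebra M) (hS : IsSimpleMV M) (a b : α) :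
    Fr hM hS (M.odot a b) = max 0 (Fr hM hS a + Fr hM hS b - 1) := by
  by_cases ha : a = M.one
  · rw [ha, one_odot hM, Fr_one]
    have := Fr_nonneg hM hS b
    rw [max_eq_right (by linarith)]
    ring
  · by_cases hb : b = M.one
    · rw [hb, hM.odot_one, Fr_one]
      have := Fr_nonneg hM hS a
      rw [max_eq_right (by linarith)]
      ring
    · by_cases hov : M.oplus a b = M.one
      · have h1 := Fr_ov hM hS ha hb hov
        have := Fr_nonneg hM hS (M.odot a b)
        rw [max_eq_right (by linarith)]
        linarith
      · have hz : M.odot a b = M.zero :=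
          (odot_eq_zero_iff hM).mpr (mle_neg_of_not_ov hM hS hov)
        rw [hz, Fr_zero hM hS]
        have h1 : Fr hM hS a + Fr hM hS b ≤ 1 := by
          rw [Fr_nov hM hS ha hb hov]
          exact Fr_le_one hM hS _
        rw [max_eq_left (by linarith)]

lemma Fr_neg (hM : IsMVAlgebra M) (hS : IsSimpleMV M) (a : α) :
    Fr hM hS (M.neg a) = 1 - Fr hM hS a := by
  by_cases ha : a = M.one
  · rw [ha, neg_one hM, Fr_zero hM hS, Fr_one]; ring
  · by_cases hna : M.neg a = M.one
    · have : a = M.zero := by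
        have := congrArg M.neg hna
        rwa [neg_neg hM, neg_one hM] at this
      rw [hna, this, Fr_one, Fr_zero hM hS]; ring
    · have hov : M.oplus a (M.neg a) = M.one := oplus_neg_self hM a
      have h1 := Fr_ov hM hS ha hna hov
      rw [odot_neg_self hM, Fr_zero hM hS] at h1
      linarith

lemma Fr_impl (hM : IsMVAlgebra M) (hS : IsSimpleMV M) (a b : α) :
    Fr hM hS (M.impl a b) = min 1 (1 - Fr hM hS a + Fr hM hS b) := by
  rw [impl_eq_oplus hM, Fr_oplus hM hS, Fr_neg hM hS]

lemma Fr_meet (hM : IsMVAlgebra M) (hS : IsSimpleMV M) (a b : α) :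
    Fr hM hS (M.meet a b) = min (Fr hM hS a) (Fr hM hS b) := by
  rcases mle_total hM hS a b with h | h
  · rw [show M.meet a b = a from h, min_eq_left (Fr_mono hM hS h)]
  · rw [hM.meet_comm, show M.meet b a = b from h, min_eq_right (Fr_mono hM hS h)]

lemma Fr_join (hM : IsMVAlgebra M) (hS : IsSimpleMV M) (a b : α) :
    Fr hM hS (M.join a b) = max (Fr hM hS a) (Fr hM hS b) := by
  rcases mle_total hM hS a b with h | h
  · rw [show M.join a b = b from (join_eq_iff_mle hM).mp h,
      max_eq_right (Fr_mono hM hS h)]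
  · rw [hM.join_comm, show M.join b a = a from (join_eq_iff_mle hM).mp h,
      max_eq_left (Fr_mono hM hS h)]

end Chang


end MVAux

/-- every simple MV-algebra embeds into the standard MV-algebra [0,1];
that is, [0,1] is the maximum simple MV-algebra. -/
theorem stdMV_maximum_simple {α : Type} (M : MVOps α)
    (hMV : IsMVAlgebra M) (hSimple : IsSimpleMV M) :
    ∃ f : α → unitInterval, Function.Injective f ∧ IsMVHom M stdMV f := by
  classical
  let f : α → unitInterval := fun a =>
    ⟨MVAux.Fr hMV hSimple a, MVAux.Fr_nonneg hMV hSimple a, MVAux.Fr_le_one hMV hSimple a⟩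
  have hhom : IsMVHom M stdMV f := by
    refine ⟨?_, ?_, ?_, ?_, ?_, ?_⟩
    · exact Subtype.ext (by show MVAux.Fr hMV hSimple M.zero = (0:ℝ); exact MVAux.Fr_zero hMV hSimple)
    · exact Subtype.ext (by show MVAux.Fr hMV hSimple M.one = (1:ℝ); exact MVAux.Fr_one hMV hSimple)
    · intro x y
      rcases MVAux.mle_total hMV hSimple x y with h | h
      · have hle : f x ≤ f y := Subtype.mk_le_mk.mpr (MVAux.Fr_mono hMV hSimple h)
        rw [show M.meet x y = x from h]
        exact (min_eq_left hle).symm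
      · have hle : f y ≤ f x := Subtype.mk_le_mk.mpr (MVAux.Fr_mono hMV hSimple h)
        rw [hMV.meet_comm, show M.meet y x = y from h]
        exact (min_eq_right hle).symm
    · intro x y
      rcases MVAux.mle_total hMV hSimple x y with h | h
      · have hle : f x ≤ f y := Subtype.mk_le_mk.mpr (MVAux.Fr_mono hMV hSimple h)
        rw [show M.join x y = y from (MVAux.join_eq_iff_mle hMV).mp h]
        exact (max_eq_right hle).symm
      · have hle : f y ≤ f x := Subtype.mk_le_mk.mpr (MVAux.Fr_mono hMV hSimple h)
        rw [hMV.join_comm, show M.join y x = x from (MVAux.join_eq_iff_mle hMV).mp h]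
        exact (max_eq_left hle).symm
    · intro x y
      exact Subtype.ext (MVAux.Fr_odot hMV hSimple x y)
    · intro x y
      exact Subtype.ext (MVAux.Fr_impl hMV hSimple x y)
  have hinj : Function.Injective f := by
    have hcong : IsMVCong M (fun x y => f x = f y) := by
      refine ⟨⟨fun _ => rfl, fun h => h.symm, fun h1 h2 => h1.trans h2⟩, ?_, ?_, ?_, ?_⟩
      · intro a b c d h1 h2
        rw [hhom.map_meet, hhom.map_meet, h1, h2]
      · intro a b c d h1 h2
        rw [hhom.map_join, hhom.map_join, h1, h2]
      · intro a b c d h1 h2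
        rw [hhom.map_odot, hhom.map_odot, h1, h2]
      · intro a b c d h1 h2
        rw [hhom.map_impl, hhom.map_impl, h1, h2]
    rcases hSimple.2 _ hcong with h | h
    · intro x y hxy
      exact (h x y).mp hxy
    · exfalso
      have h01 : MVAux.Fr hMV hSimple M.zero = MVAux.Fr hMV hSimple M.one :=
        congrArg Subtype.val (h M.zero M.one)
      rw [MVAux.Fr_zero hMV hSimple, MVAux.Fr_one hMV hSimple] at h01
      norm_num at h01
  exact ⟨f, hinj, hhom⟩
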